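/- Fix t ≥ 2. For all sufficiently large n (with respect to t), the rank-generating function F_λ(q) = Σ_i c_i q^i of partitions with distinct parts contained inside λ = ⟨n, n-t, n-2t, n-3t⟩ is nonunimodal; specifically, c_{2n} > c_{2n-1} and c_{2n-1} < c_{2n-2}. -/

import Mathlib

/-- `μ` is a partition with distinct parts (strictly decreasing positive parts,
followed by a tail of zeros), encoded as a function `Fin b → ℕ`. -/
def DistinctParts {b : ℕ} (μ : Fin b → ℕ) : Prop :=
  ∀ i j : Fin b, i < j → μ j = 0 ∨ μ j < μ i

/-- `μ` is a partition with distinct parts contained inside the shifted shape `lam`. -/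
def FitsD {b : ℕ} (lam μ : Fin b → ℕ) : Prop :=
  DistinctParts μ ∧ ∀ i, μ i ≤ lam i

/-- The coefficient of `q^k` in the rank-generating function `F_lam`:
the number of partitions with distinct parts of size `k` contained inside `lam`. -/
noncomputable def Fcoeff {b : ℕ} (lam : Fin b → ℕ) (k : ℕ) : ℕ :=
  Nat.card {μ : Fin b → ℕ // FitsD lam μ ∧ ∑ i, μ i = k}

/-- The coefficient of `q^k` in the rank-generating function `G_lam` of arbitrary
partitions contained inside the straight Ferrers shape `lam`. -/
noncomputable def Gcoeff {b : ℕ} (lam : Fin b → ℕ) (k : ℕ) : ℕ :=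
  Nat.card {μ : Fin b → ℕ // Antitone μ ∧ (∀ i, μ i ≤ lam i) ∧ ∑ i, μ i = k}

/-- The coefficient of `q^i` in the Gaussian binomial coefficient `(m choose k)_q`,
which is the rank-generating function of partitions inside a `k × (m-k)` rectangle. -/
noncomputable def gaussCoeff (m k i : ℕ) : ℕ :=
  Gcoeff (fun _ : Fin k => m - k) i

set_option maxHeartbeats 1000000

open Finset

open Finset

namespace APN

def grid (B : ℕ) : Finset (ℕ × ℕ × ℕ × ℕ) :=
  range B ×ˢ range B ×ˢ range B ×ˢ range B

lemma mem_grid {B : ℕ} {x : ℕ × ℕ × ℕ × ℕ} :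
    x ∈ grid B ↔ x.1 < B ∧ x.2.1 < B ∧ x.2.2.1 < B ∧ x.2.2.2 < B := by
  simp [grid]

def bxset (m j : ℕ) : Finset (ℕ × ℕ × ℕ × ℕ) :=
  (grid (m+1)).filter (fun x => x.2.2.2 ≤ x.2.2.1 ∧ x.2.2.1 ≤ x.2.1 ∧ x.2.1 ≤ x.1 ∧
    x.1 ≤ m ∧ x.1 + x.2.1 + x.2.2.1 + x.2.2.2 = j)

def pb3set (m j : ℕ) : Finset (ℕ × ℕ × ℕ × ℕ) :=
  (grid (m+1)).filter (fun x => x.2.2.2 = 0 ∧ x.2.2.1 ≤ x.2.1 ∧ x.2.1 ≤ x.1 ∧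
    x.1 ≤ m ∧ x.1 + x.2.1 + x.2.2.1 + x.2.2.2 = j)

def p3 (j : ℕ) : ℕ := (pb3set j j).card

lemma mem_bxset {m j : ℕ} {x : ℕ × ℕ × ℕ × ℕ} :
    x ∈ bxset m j ↔ x.2.2.2 ≤ x.2.2.1 ∧ x.2.2.1 ≤ x.2.1 ∧ x.2.1 ≤ x.1 ∧
      x.1 ≤ m ∧ x.1 + x.2.1 + x.2.2.1 + x.2.2.2 = j := by
  simp only [bxset, mem_filter, mem_grid]
  constructor
  · tauto
  · intro h; refine ⟨?_, h⟩; omega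

lemma mem_pb3set {m j : ℕ} {x : ℕ × ℕ × ℕ × ℕ} :
    x ∈ pb3set m j ↔ x.2.2.2 = 0 ∧ x.2.2.1 ≤ x.2.1 ∧ x.2.1 ≤ x.1 ∧
      x.1 ≤ m ∧ x.1 + x.2.1 + x.2.2.1 + x.2.2.2 = j := by
  simp only [pb3set, mem_filter, mem_grid]
  constructor
  · tauto
  · intro h; refine ⟨?_, h⟩; omega

/-- symmetry of the 4-row box -/
lemma bxsym {m j : ℕ} (hj : j ≤ 4*m) : (bxset m j).card = (bxset m (4*m - j)).card := by
  apply Finset.card_bij (fun x _ => (m - x.2.2.2, m - x.2.2.1, m - x.2.1, m - x.1))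
  · intro a ha
    rw [mem_bxset] at ha ⊢
    dsimp only at ha ⊢
    omega
  · intro a ha b hb h
    rw [mem_bxset] at ha hb
    rw [Prod.ext_iff, Prod.ext_iff, Prod.ext_iff] at h
    dsimp only at h
    ext <;> omega
  · intro b hb
    rw [mem_bxset] at hb
    refine ⟨(m - b.2.2.2, m - b.2.2.1, m - b.2.1, m - b.1), ?_, ?_⟩
    · rw [mem_bxset]; dsimp only; omega
    · dsimp only; ext <;> dsimp only <;> omega

end APN

open Finset

namespace APN

lemma pb3sym {m j : ℕ} (hj : j ≤ 3*m) : (pb3set m j).card = (pb3set m (3*m - j)).card := by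
  apply Finset.card_bij (fun x _ => (m - x.2.2.1, m - x.2.1, m - x.1, 0))
  · intro a ha
    rw [mem_pb3set] at ha ⊢
    dsimp only at ha ⊢
    omega
  · intro a ha b hb h
    rw [mem_pb3set] at ha hb
    rw [Prod.ext_iff, Prod.ext_iff, Prod.ext_iff] at h
    dsimp only at h
    ext <;> omega
  · intro b hb
    rw [mem_pb3set] at hb
    refine ⟨(m - b.2.2.1, m - b.2.1, m - b.1, 0), ?_, ?_⟩
    · rw [mem_pb3set]; try dsimp only; omega
    · try dsimp only; ext <;> dsimp only <;> omega

/-- the bound is irrelevant once `j ≤ m`; `p3 j = (pb3set j j).card` -/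
lemma pb3stab {m j : ℕ} (hj : j ≤ m) : (pb3set m j).card = p3 j := by
  rw [p3]
  apply Finset.card_bij (fun x _ => x)
  · intro a ha
    rw [mem_pb3set] at ha ⊢
    omega
  · intro a ha b hb h
    exact h
  · intro b hb
    rw [mem_pb3set] at hb
    exact ⟨b, by rw [mem_pb3set]; omega, rfl⟩

/-- peeling off the 4th part -/
lemma bxpeel {m j : ℕ} (hm : 1 ≤ m) (hj : 4 ≤ j) :
    (bxset m j).card = (pb3set m j).card + (bxset (m-1) (j-4)).card := by
  have hsplit := Finset.card_filter_add_card_filter_not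
    (s := bxset m j) (p := fun x => x.2.2.2 = 0)
  rw [← hsplit]
  congr 1
  · apply Finset.card_bij (fun x _ => x)
    · intro a ha
      simp only [mem_filter, mem_bxset] at ha
      rw [mem_pb3set]
      omega
    · intro a ha b hb h; exact h
    · intro b hb
      rw [mem_pb3set] at hb
      refine ⟨b, ?_, rfl⟩
      simp only [mem_filter, mem_bxset]
      omega
  · apply Finset.card_bij (fun x _ => (x.1 - 1, x.2.1 - 1, x.2.2.1 - 1, x.2.2.2 - 1))
    · intro a ha
      simp only [mem_filter, mem_bxset] at ha
      rw [mem_bxset]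
      try dsimp only
      try simp only [true_and, and_true]
      omega
    · intro a ha b hb h
      simp only [mem_filter, mem_bxset] at ha hb
      rw [Prod.ext_iff, Prod.ext_iff, Prod.ext_iff] at h
      dsimp only at h
      ext <;> omega
    · intro b hb
      rw [mem_bxset] at hb
      refine ⟨(b.1 + 1, b.2.1 + 1, b.2.2.1 + 1, b.2.2.2 + 1), ?_, ?_⟩
      · simp only [mem_filter, mem_bxset]
        try dsimp only
        try simp only [true_and, and_true]
        omega
      · try dsimp only; ext <;> dsimp only <;> omega

/-- peeling off the 3rd part plus two-part count -/
lemma p3rec {j : ℕ} (hj : 3 ≤ j) : p3 j = p3 (j-3) + (j/2 + 1) := by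
  have hsplit := Finset.card_filter_add_card_filter_not
    (s := pb3set j j) (p := fun x => x.2.2.1 = 0)
  have h2 : (Finset.filter (fun x => ¬ x.2.2.1 = 0) (pb3set j j)).card
      = (pb3set (j-3) (j-3)).card := by
    apply Finset.card_bij (fun x _ => (x.1 - 1, x.2.1 - 1, x.2.2.1 - 1, 0))
    · intro a ha
      simp only [mem_filter, mem_pb3set] at ha
      rw [mem_pb3set]
      try dsimp only
      try simp only [true_and, and_true]
      omega
    · intro a ha b hb h
      simp only [mem_filter, mem_pb3set] at ha hb
      rw [Prod.ext_iff, Prod.ext_iff, Prod.ext_iff] at h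
      try dsimp only at h
      ext <;> omega
    · intro b hb
      rw [mem_pb3set] at hb
      refine ⟨(b.1 + 1, b.2.1 + 1, b.2.2.1 + 1, 0), ?_, ?_⟩
      · simp only [mem_filter, mem_pb3set]
        try dsimp only
        try simp only [true_and, and_true]
        omega
      · try dsimp only
        ext <;> try dsimp only
        all_goals omega
  have h1 : (Finset.filter (fun x => x.2.2.1 = 0) (pb3set j j)).card = j/2 + 1 := by
    rw [show j/2 + 1 = (Finset.range (j/2+1)).card from (Finset.card_range _).symm]
    apply Finset.card_bij (fun x _ => x.2.1)
    · intro a ha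
      simp only [mem_filter, mem_pb3set] at ha
      rw [Finset.mem_range]
      omega
    · intro a ha b hb h
      simp only [mem_filter, mem_pb3set] at ha hb
      ext <;> omega
    · intro b hb
      rw [Finset.mem_range] at hb
      refine ⟨(j - b, b, 0, 0), ?_, rfl⟩
      simp only [mem_filter, mem_pb3set]
      try dsimp only
      try simp only [true_and, and_true]
      omega
  have e1 : p3 j = (pb3set j j).card := rfl
  have e2 : p3 (j-3) = (pb3set (j-3) (j-3)).card := rfl
  omega

end APN

open Finset
namespace APN

def rho : ℕ → ℕ
  | 0 => 0 | 1 => 7 | 2 => 4 | 3 => 3 | 4 => 4 | _ => 7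

lemma rho_le (r : ℕ) : rho r ≤ 7 := by
  rcases r with _|_|_|_|_|r <;> simp [rho]

lemma p3_0 : p3 0 = 1 := by decide
lemma p3_1 : p3 1 = 1 := by decide
lemma p3_2 : p3 2 = 2 := by decide

lemma p3closed : ∀ j : ℕ, 12 * p3 j + rho (j % 6) = j*j + 6*j + 12 := by
  intro j
  induction j using Nat.strong_induction_on with
  | _ j ih =>
    rcases lt_or_ge j 3 with h|h
    · interval_cases j <;> simp [p3_0, p3_1, p3_2, rho]
    · obtain ⟨i, rfl⟩ : ∃ i, j = i + 3 := ⟨j - 3, by omega⟩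
      have hrec : p3 (i+3) = p3 ((i+3)-3) + ((i+3)/2 + 1) := p3rec (by omega)
      have hri : (i+3)-3 = i := by omega
      rw [hri] at hrec
      have hih := ih i (by omega)
      have h6 : i % 6 = 0 ∨ i % 6 = 1 ∨ i % 6 = 2 ∨ i % 6 = 3 ∨ i % 6 = 4 ∨ i % 6 = 5 := by
        omega
      have key : (i+3)*(i+3) = i*i + 6*i + 9 := by ring
      have h3 : (i + 3) % 6 = (i % 6 + 3) % 6 := by omega
      rcases h6 with h|h|h|h|h|h <;>
      · rw [h] at hih h3
        norm_num [rho] at hih h3 ⊢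
        rw [h3, hrec, key]
        try norm_num [rho]
        set A := i * i with hA
        omega
end APN

open Finset
namespace APN

lemma claims : ∀ m : ℕ, 1 ≤ m →
    ((bxset m (2*m)).card + p3 (m-1) = (bxset m (2*m+1)).card + p3 m ∧
     (bxset m (2*m+1)).card = (bxset m (2*m+2)).card) := by
  intro m hm
  induction m, hm using Nat.le_induction with
  | base => constructor <;> decide
  | succ m hm ih =>
    -- V0 (m+1) = p3 (m+1) + V2 m
    have e0 : (bxset (m+1) (2*(m+1))).card = p3 (m+1) + (bxset m (2*m+2)).card := by
      have hp := bxpeel (m := m+1) (j := 2*(m+1)) (by omega) (by omega)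
      have hs := pb3sym (m := m+1) (j := 2*(m+1)) (by omega)
      have h1 : 3*(m+1) - 2*(m+1) = m+1 := by omega
      rw [h1] at hs
      have hst := pb3stab (m := m+1) (j := m+1) (by omega)
      have hb := bxsym (m := m) (j := 2*m - 2) (by omega)
      have h2 : 4*m - (2*m-2) = 2*m+2 := by omega
      rw [h2] at hb
      have h3 : 2*(m+1) - 4 = 2*m - 2 := by omega
      have h4 : (m+1) - 1 = m := by omega
      rw [h3, h4] at hp
      omega
    -- V1 (m+1) = p3 m + V1 m
    have e1 : (bxset (m+1) (2*(m+1)+1)).card = p3 m + (bxset m (2*m+1)).card := by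
      have hp := bxpeel (m := m+1) (j := 2*(m+1)+1) (by omega) (by omega)
      have hs := pb3sym (m := m+1) (j := 2*(m+1)+1) (by omega)
      have h1 : 3*(m+1) - (2*(m+1)+1) = m := by omega
      rw [h1] at hs
      have hst := pb3stab (m := m+1) (j := m) (by omega)
      have hb := bxsym (m := m) (j := 2*m - 1) (by omega)
      have h2 : 4*m - (2*m-1) = 2*m+1 := by omega
      rw [h2] at hb
      have h3 : 2*(m+1)+1 - 4 = 2*m - 1 := by omega
      have h4 : (m+1) - 1 = m := by omega
      rw [h3, h4] at hp
      omega
    -- V2 (m+1) = p3 (m-1) + V0 m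
    have e2 : (bxset (m+1) (2*(m+1)+2)).card = p3 (m-1) + (bxset m (2*m)).card := by
      have hp := bxpeel (m := m+1) (j := 2*(m+1)+2) (by omega) (by omega)
      have hs := pb3sym (m := m+1) (j := 2*(m+1)+2) (by omega)
      have h1 : 3*(m+1) - (2*(m+1)+2) = m-1 := by omega
      rw [h1] at hs
      have hst := pb3stab (m := m+1) (j := m-1) (by omega)
      have h3 : 2*(m+1)+2 - 4 = 2*m := by omega
      have h4 : (m+1) - 1 = m := by omega
      rw [h3, h4] at hp
      omega
    obtain ⟨ih1, ih2⟩ := ih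
    have hmm : (m+1) - 1 = m := by omega
    rw [hmm]
    constructor
    · -- claim1 (m+1): V0(m+1) + p3 m = V1(m+1) + p3 (m+1)
      omega
    · -- claim2 (m+1): V1(m+1) = V2(m+1)
      omega

lemma V23 {m : ℕ} (hm : 3 ≤ m) :
    (bxset m (2*m+2)).card + p3 (m-3) = (bxset m (2*m+3)).card + p3 (m-1) := by
  have e2 : (bxset m (2*m+2)).card = p3 (m-2) + (bxset (m-1) (2*(m-1))).card := by
    have hp := bxpeel (m := m) (j := 2*m+2) (by omega) (by omega)
    have hs := pb3sym (m := m) (j := 2*m+2) (by omega)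
    have h1 : 3*m - (2*m+2) = m-2 := by omega
    rw [h1] at hs
    have hst := pb3stab (m := m) (j := m-2) (by omega)
    have h3 : 2*m+2 - 4 = 2*(m-1) := by omega
    rw [h3] at hp
    omega
  have e3 : (bxset m (2*m+3)).card = p3 (m-3) + (bxset (m-1) (2*(m-1)+1)).card := by
    have hp := bxpeel (m := m) (j := 2*m+3) (by omega) (by omega)
    have hs := pb3sym (m := m) (j := 2*m+3) (by omega)
    have h1 : 3*m - (2*m+3) = m-3 := by omega
    rw [h1] at hs
    have hst := pb3stab (m := m) (j := m-3) (by omega)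
    have h3 : 2*m+3 - 4 = 2*(m-1)+1 := by omega
    rw [h3] at hp
    omega
  have hc := claims (m-1) (by omega)
  have h4 : (m-1) - 1 = m-2 := by omega
  rw [h4] at hc
  obtain ⟨hc1, hc2⟩ := hc
  have h5 : p3 (m-1-0) = p3 (m-1) := rfl
  omega

lemma V34 {m : ℕ} (hm : 4 ≤ m) :
    (bxset m (2*m+3)).card + p3 (m-4) = (bxset m (2*m+4)).card + p3 (m-3) := by
  have e3 : (bxset m (2*m+3)).card = p3 (m-3) + (bxset (m-1) (2*(m-1)+1)).card := by
    have hp := bxpeel (m := m) (j := 2*m+3) (by omega) (by omega)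
    have hs := pb3sym (m := m) (j := 2*m+3) (by omega)
    have h1 : 3*m - (2*m+3) = m-3 := by omega
    rw [h1] at hs
    have hst := pb3stab (m := m) (j := m-3) (by omega)
    have h3 : 2*m+3 - 4 = 2*(m-1)+1 := by omega
    rw [h3] at hp
    omega
  have e4 : (bxset m (2*m+4)).card = p3 (m-4) + (bxset (m-1) (2*(m-1)+2)).card := by
    have hp := bxpeel (m := m) (j := 2*m+4) (by omega) (by omega)
    have hs := pb3sym (m := m) (j := 2*m+4) (by omega)
    have h1 : 3*m - (2*m+4) = m-4 := by omega
    rw [h1] at hs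
    have hst := pb3stab (m := m) (j := m-4) (by omega)
    have h3 : 2*m+4 - 4 = 2*(m-1)+2 := by omega
    rw [h3] at hp
    omega
  have hc := (claims (m-1) (by omega)).2
  omega
end APN

open Finset
namespace APN

def fset (n t k : ℕ) : Finset (ℕ × ℕ × ℕ × ℕ) :=
  (grid (n+1)).filter (fun x =>
    ((x.2.1 = 0 ∨ x.2.1 < x.1) ∧ (x.2.2.1 = 0 ∨ x.2.2.1 < x.1) ∧
     (x.2.2.2 = 0 ∨ x.2.2.2 < x.1) ∧ (x.2.2.1 = 0 ∨ x.2.2.1 < x.2.1) ∧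
     (x.2.2.2 = 0 ∨ x.2.2.2 < x.2.1) ∧ (x.2.2.2 = 0 ∨ x.2.2.2 < x.2.2.1)) ∧
    x.1 ≤ n ∧ x.2.1 ≤ n - t ∧ x.2.2.1 ≤ n - 2*t ∧ x.2.2.2 ≤ n - 3*t ∧
    x.1 + x.2.1 + x.2.2.1 + x.2.2.2 = k)

def g3set (n k : ℕ) : Finset (ℕ × ℕ × ℕ × ℕ) :=
  (grid (n+1)).filter (fun x => x.2.2.2 = 0 ∧ 1 ≤ x.2.2.1 ∧ x.2.2.1 < x.2.1 ∧
    x.2.1 < x.1 ∧ x.1 ≤ n ∧ x.1 + x.2.1 + x.2.2.1 + x.2.2.2 = k)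

def g4set (n k : ℕ) : Finset (ℕ × ℕ × ℕ × ℕ) :=
  (grid (n+1)).filter (fun x => 1 ≤ x.2.2.2 ∧ x.2.2.2 < x.2.2.1 ∧ x.2.2.1 < x.2.1 ∧
    x.2.1 < x.1 ∧ x.1 ≤ n ∧ x.1 + x.2.1 + x.2.2.1 + x.2.2.2 = k)

def h3set (n t k : ℕ) : Finset (ℕ × ℕ × ℕ × ℕ) :=
  (grid (n+1)).filter (fun x => x.2.2.2 = 0 ∧ 1 ≤ x.2.2.1 ∧ x.2.2.1 < x.2.1 ∧
    x.2.1 < x.1 ∧ x.1 ≤ n ∧ n - t < x.2.1 ∧ x.1 + x.2.1 + x.2.2.1 + x.2.2.2 = k)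

def h4set (n t k : ℕ) : Finset (ℕ × ℕ × ℕ × ℕ) :=
  (grid (n+1)).filter (fun x => 1 ≤ x.2.2.2 ∧ x.2.2.2 < x.2.2.1 ∧ x.2.2.1 < x.2.1 ∧
    x.2.1 < x.1 ∧ x.1 ≤ n ∧ n - t < x.2.1 ∧ x.1 + x.2.1 + x.2.2.1 + x.2.2.2 = k)

def p2set (n t k : ℕ) : Finset (ℕ × ℕ × ℕ × ℕ) :=
  (grid (n+1)).filter (fun x => x.2.2.1 = 0 ∧ x.2.2.2 = 0 ∧ 1 ≤ x.2.1 ∧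
    x.2.1 < x.1 ∧ x.1 ≤ n ∧ x.2.1 ≤ n - t ∧ x.1 + x.2.1 + x.2.2.1 + x.2.2.2 = k)

lemma master {n t k : ℕ} (ht : 2 ≤ t) (hn : 6*t + 10 ≤ n)
    (hk1 : 2*n - 2 ≤ k) (hk2 : k ≤ 2*n) :
    (fset n t k).card + (h3set n t k).card + (h4set n t k).card
      = (p2set n t k).card + (g3set n k).card + (g4set n k).card := by
  -- split fset by number of positive parts
  have s1 := Finset.card_filter_add_card_filter_not
    (s := fset n t k) (p := fun x => 1 ≤ x.2.2.2)
  have s2 := Finset.card_filter_add_card_filter_not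
    (s := (fset n t k).filter (fun x => ¬ 1 ≤ x.2.2.2)) (p := fun x => 1 ≤ x.2.2.1)
  -- split g3set and g4set by whether b ≤ n - t
  have s3 := Finset.card_filter_add_card_filter_not
    (s := g3set n k) (p := fun x => x.2.1 ≤ n - t)
  have s4 := Finset.card_filter_add_card_filter_not
    (s := g4set n k) (p := fun x => x.2.1 ≤ n - t)
  -- identifications
  have e4 : (fset n t k).filter (fun x => 1 ≤ x.2.2.2)
      = (g4set n k).filter (fun x => x.2.1 ≤ n - t) := by
    ext x
    simp only [fset, g4set, mem_filter, mem_grid]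
    constructor
    · intro h; refine ⟨⟨⟨?_, ?_⟩, ?_⟩, ?_⟩ <;> omega
    · intro h; refine ⟨⟨⟨?_, ?_⟩, ?_, ?_, ?_, ?_, ?_, ?_⟩, ?_⟩ <;> omega
  have e4h : (g4set n k).filter (fun x => ¬ x.2.1 ≤ n - t) = h4set n t k := by
    ext x
    simp only [g4set, h4set, mem_filter, mem_grid]
    constructor
    · intro h; refine ⟨?_, ?_⟩ <;> omega
    · intro h; refine ⟨⟨?_, ?_⟩, ?_⟩ <;> omega
  have e3 : ((fset n t k).filter (fun x => ¬ 1 ≤ x.2.2.2)).filter (fun x => 1 ≤ x.2.2.1)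
      = (g3set n k).filter (fun x => x.2.1 ≤ n - t) := by
    ext x
    simp only [fset, g3set, mem_filter, mem_grid]
    constructor
    · intro h; refine ⟨⟨?_, ?_⟩, ?_⟩ <;> omega
    · intro h; refine ⟨⟨⟨?_, ?_⟩, ?_⟩, ?_⟩ <;> omega
  have e3h : (g3set n k).filter (fun x => ¬ x.2.1 ≤ n - t) = h3set n t k := by
    ext x
    simp only [g3set, h3set, mem_filter, mem_grid]
    constructor
    · intro h; refine ⟨?_, ?_⟩ <;> omega
    · intro h; refine ⟨⟨?_, ?_⟩, ?_⟩ <;> omega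
  have e2 : ((fset n t k).filter (fun x => ¬ 1 ≤ x.2.2.2)).filter (fun x => ¬ 1 ≤ x.2.2.1)
      = p2set n t k := by
    ext x
    simp only [fset, p2set, mem_filter, mem_grid]
    constructor
    · intro h; refine ⟨?_, ?_⟩ <;> omega
    · intro h; refine ⟨⟨⟨?_, ?_⟩, ?_⟩, ?_⟩ <;> omega
  have c4 := congrArg Finset.card e4
  have c4h := congrArg Finset.card e4h
  have c3 := congrArg Finset.card e3
  have c3h := congrArg Finset.card e3h
  have c2 := congrArg Finset.card e2
  omega

end APN

open Finset
namespace APN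

lemma mem_g3set {n k : ℕ} {x : ℕ × ℕ × ℕ × ℕ} :
    x ∈ g3set n k ↔ x.2.2.2 = 0 ∧ 1 ≤ x.2.2.1 ∧ x.2.2.1 < x.2.1 ∧
      x.2.1 < x.1 ∧ x.1 ≤ n ∧ x.1 + x.2.1 + x.2.2.1 + x.2.2.2 = k := by
  simp only [g3set, mem_filter, mem_grid]
  constructor
  · tauto
  · intro h; refine ⟨?_, h⟩; omega

lemma mem_g4set {n k : ℕ} {x : ℕ × ℕ × ℕ × ℕ} :
    x ∈ g4set n k ↔ 1 ≤ x.2.2.2 ∧ x.2.2.2 < x.2.2.1 ∧ x.2.2.1 < x.2.1 ∧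
      x.2.1 < x.1 ∧ x.1 ≤ n ∧ x.1 + x.2.1 + x.2.2.1 + x.2.2.2 = k := by
  simp only [g4set, mem_filter, mem_grid]
  constructor
  · tauto
  · intro h; refine ⟨?_, h⟩; omega

lemma mem_h3set {n t k : ℕ} {x : ℕ × ℕ × ℕ × ℕ} :
    x ∈ h3set n t k ↔ x.2.2.2 = 0 ∧ 1 ≤ x.2.2.1 ∧ x.2.2.1 < x.2.1 ∧
      x.2.1 < x.1 ∧ x.1 ≤ n ∧ n - t < x.2.1 ∧ x.1 + x.2.1 + x.2.2.1 + x.2.2.2 = k := by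
  simp only [h3set, mem_filter, mem_grid]
  constructor
  · tauto
  · intro h; refine ⟨?_, h⟩; omega

lemma mem_h4set {n t k : ℕ} {x : ℕ × ℕ × ℕ × ℕ} :
    x ∈ h4set n t k ↔ 1 ≤ x.2.2.2 ∧ x.2.2.2 < x.2.2.1 ∧ x.2.2.1 < x.2.1 ∧
      x.2.1 < x.1 ∧ x.1 ≤ n ∧ n - t < x.2.1 ∧ x.1 + x.2.1 + x.2.2.1 + x.2.2.2 = k := by
  simp only [h4set, mem_filter, mem_grid]
  constructor
  · tauto
  · intro h; refine ⟨?_, h⟩; omega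

lemma mem_p2set {n t k : ℕ} {x : ℕ × ℕ × ℕ × ℕ} :
    x ∈ p2set n t k ↔ x.2.2.1 = 0 ∧ x.2.2.2 = 0 ∧ 1 ≤ x.2.1 ∧
      x.2.1 < x.1 ∧ x.1 ≤ n ∧ x.2.1 ≤ n - t ∧ x.1 + x.2.1 + x.2.2.1 + x.2.2.2 = k := by
  simp only [p2set, mem_filter, mem_grid]
  constructor
  · tauto
  · intro h; refine ⟨?_, h⟩; omega

/-- staircase bijection for 4 strict parts -/
lemma g4_bx {n k : ℕ} (hn : 5 ≤ n) (hk : 10 ≤ k) :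
    (g4set n k).card = (bxset (n-4) (k-10)).card := by
  apply Finset.card_bij (fun x _ => (x.1 - 4, x.2.1 - 3, x.2.2.1 - 2, x.2.2.2 - 1))
  · intro a ha
    rw [mem_g4set] at ha
    rw [mem_bxset]
    try dsimp only
    omega
  · intro a ha b hb h
    rw [mem_g4set] at ha hb
    rw [Prod.ext_iff, Prod.ext_iff, Prod.ext_iff] at h
    try dsimp only at h
    ext <;> omega
  · intro b hb
    rw [mem_bxset] at hb
    refine ⟨(b.1 + 4, b.2.1 + 3, b.2.2.1 + 2, b.2.2.2 + 1), ?_, ?_⟩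
    · rw [mem_g4set]
      try dsimp only
      omega
    · try dsimp only
      ext <;> try dsimp only
      all_goals omega

/-- staircase bijection for 3 strict parts -/
lemma g3_pb3 {n k : ℕ} (hn : 4 ≤ n) (hk : 6 ≤ k) :
    (g3set n k).card = (pb3set (n-3) (k-6)).card := by
  apply Finset.card_bij (fun x _ => (x.1 - 3, x.2.1 - 2, x.2.2.1 - 1, 0))
  · intro a ha
    rw [mem_g3set] at ha
    rw [mem_pb3set]
    try dsimp only
    omega
  · intro a ha b hb h
    rw [mem_g3set] at ha hb
    rw [Prod.ext_iff, Prod.ext_iff, Prod.ext_iff] at h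
    try dsimp only at h
    ext <;> omega
  · intro b hb
    rw [mem_pb3set] at hb
    refine ⟨(b.1 + 3, b.2.1 + 2, b.2.2.1 + 1, 0), ?_, ?_⟩
    · rw [mem_g3set]
      try dsimp only
      omega
    · try dsimp only
      ext <;> try dsimp only
      all_goals omega

lemma g4_eval {n : ℕ} (hn : 12 ≤ n) (e : ℕ) (he : e ≤ 2) :
    (g4set n (2*n - e)).card = (bxset (n-4) (2*(n-4)+2+e)).card := by
  rw [g4_bx (by omega) (by omega)]
  have hs := bxsym (m := n-4) (j := 2*n - e - 10) (by omega)
  have h1 : 4*(n-4) - (2*n - e - 10) = 2*(n-4)+2+e := by omega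
  rw [h1] at hs
  have h2 : 2*n - e - 10 = 2*n - e - 10 := rfl
  rw [← hs]

lemma g3_eval0 {n : ℕ} (hn : 12 ≤ n) : (g3set n (2*n)).card = p3 (n-3) := by
  rw [g3_pb3 (by omega) (by omega)]
  have hs := pb3sym (m := n-3) (j := 2*n - 6) (by omega)
  have h1 : 3*(n-3) - (2*n - 6) = n-3 := by omega
  rw [h1] at hs
  rw [hs]
  exact pb3stab (by omega)

lemma g3_eval1 {n : ℕ} (hn : 12 ≤ n) : (g3set n (2*n - 1)).card + 1 = p3 (n-2) := by
  rw [g3_pb3 (by omega) (by omega)]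
  have hs := pb3sym (m := n-3) (j := 2*n - 1 - 6) (by omega)
  have h1 : 3*(n-3) - (2*n - 1 - 6) = n-2 := by omega
  rw [h1] at hs
  rw [hs]
  have hins : pb3set (n-2) (n-2) = insert ((n-2 : ℕ), (0:ℕ), (0:ℕ), (0:ℕ)) (pb3set (n-3) (n-2)) := by
    ext x
    simp only [Finset.mem_insert, mem_pb3set, Prod.ext_iff]
    try dsimp only
    omega
  have hnm : ((n-2 : ℕ), (0:ℕ), (0:ℕ), (0:ℕ)) ∉ pb3set (n-3) (n-2) := by
    rw [mem_pb3set]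
    try dsimp only
    omega
  have : p3 (n-2) = (pb3set (n-2) (n-2)).card := rfl
  rw [this, hins, Finset.card_insert_of_notMem hnm]

lemma g3_eval2 {n : ℕ} (hn : 12 ≤ n) : (g3set n (2*n - 2)).card + 2 = p3 (n-1) := by
  rw [g3_pb3 (by omega) (by omega)]
  have hs := pb3sym (m := n-3) (j := 2*n - 2 - 6) (by omega)
  have h1 : 3*(n-3) - (2*n - 2 - 6) = n-1 := by omega
  rw [h1] at hs
  rw [hs]
  have hins : pb3set (n-1) (n-1)
      = insert ((n-1 : ℕ), (0:ℕ), (0:ℕ), (0:ℕ))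
        (insert ((n-2 : ℕ), (1:ℕ), (0:ℕ), (0:ℕ)) (pb3set (n-3) (n-1))) := by
    ext x
    simp only [Finset.mem_insert, mem_pb3set, Prod.ext_iff]
    try dsimp only
    omega
  have hnm2 : ((n-2 : ℕ), (1:ℕ), (0:ℕ), (0:ℕ)) ∉ pb3set (n-3) (n-1) := by
    rw [mem_pb3set]
    try dsimp only
    omega
  have hnm1 : ((n-1 : ℕ), (0:ℕ), (0:ℕ), (0:ℕ))
      ∉ insert ((n-2 : ℕ), (1:ℕ), (0:ℕ), (0:ℕ)) (pb3set (n-3) (n-1)) := by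
    simp only [Finset.mem_insert, mem_pb3set, Prod.ext_iff]
    try dsimp only
    omega
  have : p3 (n-1) = (pb3set (n-1) (n-1)).card := rfl
  rw [this, hins, Finset.card_insert_of_notMem hnm1, Finset.card_insert_of_notMem hnm2]

end APN

open Finset
namespace APN

lemma h3_mono {n t : ℕ} (ht : 2 ≤ t) (hn : 6*t+10 ≤ n) :
    (h3set n t (2*n-2)).card ≤ (h3set n t (2*n-1)).card := by
  apply Finset.card_le_card_of_injOn (fun x => (x.1, x.2.1, x.2.2.1 + 1, x.2.2.2))
  · intro a ha
    rw [Finset.mem_coe, mem_h3set] at ha ⊢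
    try dsimp only
    omega
  · intro a ha b hb h
    rw [Finset.mem_coe, mem_h3set] at ha hb
    rw [Prod.ext_iff, Prod.ext_iff, Prod.ext_iff] at h
    try dsimp only at h
    ext <;> omega

lemma h3_plus {n t : ℕ} (ht : 3 ≤ t) (hn : 6*t+10 ≤ n) :
    (h3set n t (2*n-2)).card + 1 ≤ (h3set n t (2*n-1)).card := by
  classical
  have hinj : Set.InjOn (fun x : ℕ×ℕ×ℕ×ℕ => (x.1, x.2.1, x.2.2.1 + 1, x.2.2.2))
      (h3set n t (2*n-2)) := by
    intro a ha b hb h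
    rw [Finset.mem_coe, mem_h3set] at ha hb
    rw [Prod.ext_iff, Prod.ext_iff, Prod.ext_iff] at h
    try dsimp only at h
    ext <;> omega
  have himg := Finset.card_image_of_injOn hinj
  have hw : ((n:ℕ), n-2, 1, 0) ∉
      (h3set n t (2*n-2)).image (fun x => (x.1, x.2.1, x.2.2.1 + 1, x.2.2.2)) := by
    rw [Finset.mem_image]
    rintro ⟨a, ha, h⟩
    rw [mem_h3set] at ha
    rw [Prod.ext_iff, Prod.ext_iff, Prod.ext_iff] at h
    try dsimp only at h
    omega
  have hsub : insert ((n:ℕ), n-2, 1, 0)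
      ((h3set n t (2*n-2)).image (fun x => (x.1, x.2.1, x.2.2.1 + 1, x.2.2.2)))
      ⊆ h3set n t (2*n-1) := by
    intro x hx
    rcases Finset.mem_insert.mp hx with h | h
    · subst h
      rw [mem_h3set]
      try dsimp only
      omega
    · rw [Finset.mem_image] at h
      obtain ⟨a, ha, rfl⟩ := h
      rw [mem_h3set] at ha ⊢
      try dsimp only
      omega
  have hcard := Finset.card_insert_of_notMem hw
  have := Finset.card_le_card hsub
  omega

lemma h3_up {n t : ℕ} (ht : 2 ≤ t) (hn : 6*t+10 ≤ n) :
    (h3set n t (2*n)).card ≤ (h3set n t (2*n-1)).card + 1 := by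
  have hs := Finset.card_filter_add_card_filter_not
    (s := h3set n t (2*n)) (p := fun x => 2 ≤ x.2.2.1)
  have h1 : ((h3set n t (2*n)).filter (fun x => 2 ≤ x.2.2.1)).card
      ≤ (h3set n t (2*n-1)).card := by
    apply Finset.card_le_card_of_injOn (fun x => (x.1, x.2.1, x.2.2.1 - 1, x.2.2.2))
    · intro a ha
      simp only [Finset.mem_coe, mem_filter, mem_h3set] at ha
      rw [Finset.mem_coe, mem_h3set]
      try dsimp only
      omega
    · intro a ha b hb h
      simp only [Finset.mem_coe, mem_filter, mem_h3set] at ha hb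
      rw [Prod.ext_iff, Prod.ext_iff, Prod.ext_iff] at h
      try dsimp only at h
      ext <;> omega
  have h2 : ((h3set n t (2*n)).filter (fun x => ¬ 2 ≤ x.2.2.1)).card ≤ 1 := by
    apply Finset.card_le_one.mpr
    intro a ha b hb
    obtain ⟨a1,a2,a3,a4⟩ := a
    obtain ⟨b1,b2,b3,b4⟩ := b
    simp only [mem_filter, mem_h3set] at ha hb
    simp only [Prod.mk.injEq]
    omega
  omega

lemma h4_mono {n t : ℕ} (ht : 2 ≤ t) (hn : 6*t+10 ≤ n) :
    (h4set n t (2*n-2)).card ≤ (h4set n t (2*n-1)).card := by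
  apply Finset.card_le_card_of_injOn (fun x => (x.1, x.2.1, x.2.2.1 + 1, x.2.2.2))
  · intro a ha
    rw [Finset.mem_coe, mem_h4set] at ha ⊢
    try dsimp only
    omega
  · intro a ha b hb h
    rw [Finset.mem_coe, mem_h4set] at ha hb
    rw [Prod.ext_iff, Prod.ext_iff, Prod.ext_iff] at h
    try dsimp only at h
    ext <;> omega

lemma h4_up {n t : ℕ} (ht : 2 ≤ t) (hn : 6*t+10 ≤ n) :
    (h4set n t (2*n)).card ≤ (h4set n t (2*n-1)).card + t*t := by
  have hs := Finset.card_filter_add_card_filter_not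
    (s := h4set n t (2*n)) (p := fun x => x.2.2.2 + 2 ≤ x.2.2.1)
  have h1 : ((h4set n t (2*n)).filter (fun x => x.2.2.2 + 2 ≤ x.2.2.1)).card
      ≤ (h4set n t (2*n-1)).card := by
    apply Finset.card_le_card_of_injOn (fun x => (x.1, x.2.1, x.2.2.1 - 1, x.2.2.2))
    · intro a ha
      simp only [Finset.mem_coe, mem_filter, mem_h4set] at ha
      rw [Finset.mem_coe, mem_h4set]
      try dsimp only
      omega
    · intro a ha b hb h
      simp only [Finset.mem_coe, mem_filter, mem_h4set] at ha hb
      rw [Prod.ext_iff, Prod.ext_iff, Prod.ext_iff] at h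
      try dsimp only at h
      ext <;> omega
  have h2 : ((h4set n t (2*n)).filter (fun x => ¬ x.2.2.2 + 2 ≤ x.2.2.1)).card
      ≤ ((Finset.Ioc (n-t) n) ×ˢ (Finset.Ioc (n-t) n)).card := by
    apply Finset.card_le_card_of_injOn (fun x => (x.1, x.2.1))
    · intro a ha
      simp only [Finset.mem_coe, mem_filter, mem_h4set] at ha
      simp only [Finset.mem_coe, Finset.mem_product, Finset.mem_Ioc]
      try dsimp only
      omega
    · intro a ha b hb h
      simp only [Finset.mem_coe, mem_filter, mem_h4set] at ha hb
      rw [Prod.ext_iff] at h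
      try dsimp only at h
      ext <;> omega
  have h3 : ((Finset.Ioc (n-t) n) ×ˢ (Finset.Ioc (n-t) n)).card = t * t := by
    rw [Finset.card_product, Nat.card_Ioc]
    have : n - (n-t) = t := by omega
    rw [this]
  omega

lemma p2_0 {n t : ℕ} (ht : 2 ≤ t) (hn : 6*t+10 ≤ n) : (p2set n t (2*n)).card = 0 := by
  rw [Finset.card_eq_zero, Finset.eq_empty_iff_forall_notMem]
  intro x hx
  rw [mem_p2set] at hx
  omega

lemma p2_1 {n t : ℕ} (ht : 2 ≤ t) (hn : 6*t+10 ≤ n) : (p2set n t (2*n-1)).card = 0 := by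
  rw [Finset.card_eq_zero, Finset.eq_empty_iff_forall_notMem]
  intro x hx
  rw [mem_p2set] at hx
  omega

lemma p2_w {n : ℕ} (hn : 22 ≤ n) : 1 ≤ (p2set n 2 (2*n-2)).card := by
  rw [Nat.succ_le_iff, Finset.card_pos]
  refine ⟨((n:ℕ), n-2, 0, 0), ?_⟩
  rw [mem_p2set]
  try dsimp only
  omega

end APN

open Finset
namespace APN

lemma mem_fset {n t k : ℕ} {x : ℕ × ℕ × ℕ × ℕ} :
    x ∈ fset n t k ↔
      ((x.2.1 = 0 ∨ x.2.1 < x.1) ∧ (x.2.2.1 = 0 ∨ x.2.2.1 < x.1) ∧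
       (x.2.2.2 = 0 ∨ x.2.2.2 < x.1) ∧ (x.2.2.1 = 0 ∨ x.2.2.1 < x.2.1) ∧
       (x.2.2.2 = 0 ∨ x.2.2.2 < x.2.1) ∧ (x.2.2.2 = 0 ∨ x.2.2.2 < x.2.2.1)) ∧
      x.1 ≤ n ∧ x.2.1 ≤ n - t ∧ x.2.2.1 ≤ n - 2*t ∧ x.2.2.2 ≤ n - 3*t ∧
      x.1 + x.2.1 + x.2.2.1 + x.2.2.2 = k := by
  simp only [fset, mem_filter, mem_grid]
  constructor
  · exact fun h => h.2
  · intro h; refine ⟨?_, h⟩; omega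

def tupEquiv : (Fin 4 → ℕ) ≃ (ℕ × ℕ × ℕ × ℕ) where
  toFun μ := (μ 0, μ 1, μ 2, μ 3)
  invFun x := ![x.1, x.2.1, x.2.2.1, x.2.2.2]
  left_inv μ := by
    funext i
    fin_cases i <;> rfl
  right_inv x := rfl

lemma fcoeff_eq (n t k : ℕ) :
    Fcoeff ![n, n - t, n - 2*t, n - 3*t] k = (fset n t k).card := by
  unfold Fcoeff
  have hiff : ∀ μ : Fin 4 → ℕ,
      (FitsD ![n, n - t, n - 2*t, n - 3*t] μ ∧ ∑ i, μ i = k) ↔ (tupEquiv μ ∈ fset n t k) := by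
    intro μ
    rw [mem_fset]
    show _ ↔ ((μ 1 = 0 ∨ μ 1 < μ 0) ∧ (μ 2 = 0 ∨ μ 2 < μ 0) ∧
       (μ 3 = 0 ∨ μ 3 < μ 0) ∧ (μ 2 = 0 ∨ μ 2 < μ 1) ∧
       (μ 3 = 0 ∨ μ 3 < μ 1) ∧ (μ 3 = 0 ∨ μ 3 < μ 2)) ∧
      μ 0 ≤ n ∧ μ 1 ≤ n - t ∧ μ 2 ≤ n - 2*t ∧ μ 3 ≤ n - 3*t ∧
      μ 0 + μ 1 + μ 2 + μ 3 = k
    constructor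
    · rintro ⟨⟨hdp, hle⟩, hsum⟩
      rw [Fin.sum_univ_four] at hsum
      have h01 := hdp 0 1 (by decide)
      have h02 := hdp 0 2 (by decide)
      have h03 := hdp 0 3 (by decide)
      have h12 := hdp 1 2 (by decide)
      have h13 := hdp 1 3 (by decide)
      have h23 := hdp 2 3 (by decide)
      have hl0 := hle 0
      have hl1 := hle 1
      have hl2 := hle 2
      have hl3 := hle 3
      simp only [Matrix.cons_val_zero, Matrix.cons_val_one, Matrix.head_cons,
        Matrix.cons_val_two, Matrix.tail_cons, Matrix.cons_val_three] at hl0 hl1 hl2 hl3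
      exact ⟨⟨h01, h02, h03, h12, h13, h23⟩, hl0, hl1, hl2, hl3, hsum⟩
    · rintro ⟨⟨h01, h02, h03, h12, h13, h23⟩, hl0, hl1, hl2, hl3, hsum⟩
      refine ⟨⟨?_, ?_⟩, ?_⟩
      · intro i j hij
        fin_cases i <;> fin_cases j <;>
          first
            | exact absurd hij (by decide)
            | assumption
      · intro i
        fin_cases i <;>
          simp only [Matrix.cons_val_zero, Matrix.cons_val_one, Matrix.head_cons,
            Matrix.cons_val_two, Matrix.tail_cons, Matrix.cons_val_three] <;>
          assumption
      · rw [Fin.sum_univ_four]; exact hsum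
  have e : {μ : Fin 4 → ℕ // FitsD ![n, n - t, n - 2*t, n - 3*t] μ ∧ ∑ i, μ i = k}
      ≃ {x : ℕ × ℕ × ℕ × ℕ // x ∈ fset n t k} := by
    refine Equiv.subtypeEquiv tupEquiv hiff
  rw [Nat.card_congr e, Nat.card_eq_fintype_card, Fintype.card_coe]

end APN

open APN

/-- For fixed `t ≥ 2` and all `n` large enough, `F_λ` for
`λ = ⟨n, n-t, n-2t, n-3t⟩` is nonunimodal: `c_{2n} > c_{2n-1} < c_{2n-2}`. -/
theorem arithmetic_progression_nonunimodal (t : ℕ) (ht : 2 ≤ t) :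
    ∃ N : ℕ, ∀ n ≥ N,
      Fcoeff ![n, n - t, n - 2 * t, n - 3 * t] (2 * n - 1) <
        Fcoeff ![n, n - t, n - 2 * t, n - 3 * t] (2 * n) ∧
      Fcoeff ![n, n - t, n - 2 * t, n - 3 * t] (2 * n - 1) <
        Fcoeff ![n, n - t, n - 2 * t, n - 3 * t] (2 * n - 2) := by
  refine ⟨6*(t*t) + 40, fun n hn => ?_⟩
  have htt : 2*t ≤ t*t := Nat.mul_le_mul_right t ht
  have hn' : 6*t + 10 ≤ n := by omega
  have hn12 : 12 ≤ n := by omega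
  rw [fcoeff_eq n t (2*n - 1), fcoeff_eq n t (2*n), fcoeff_eq n t (2*n - 2)]
  -- master identities
  have M0 := master ht hn' (k := 2*n) (by omega) (by omega)
  have M1 := master ht hn' (k := 2*n - 1) (by omega) (by omega)
  have M2 := master ht hn' (k := 2*n - 2) (by omega) (by omega)
  -- G3 evaluations
  have G30 := g3_eval0 hn12
  have G31 := g3_eval1 hn12
  have G32 := g3_eval2 hn12
  -- G4 evaluations
  have G40 := g4_eval hn12 0 (by omega)
  rw [Nat.sub_zero, show 2*(n-4)+2+0 = 2*(n-4)+2 from by omega] at G40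
  have G41 := g4_eval hn12 1 (by omega)
  rw [show 2*(n-4)+2+1 = 2*(n-4)+3 from by omega] at G41
  have G42 := g4_eval hn12 2 (by omega)
  rw [show 2*(n-4)+2+2 = 2*(n-4)+4 from by omega] at G42
  -- V relations at m = n-4
  have hV23 := V23 (m := n-4) (by omega)
  have hV34 := V34 (m := n-4) (by omega)
  have r1 : (n-4) - 3 = n-7 := by omega
  have r2 : (n-4) - 1 = n-5 := by omega
  have r3 : (n-4) - 4 = n-8 := by omega
  rw [r1, r2] at hV23
  rw [r3, r1] at hV34
  -- H bounds
  have H3m := h3_mono ht hn'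
  have H3u := h3_up ht hn'
  have H4m := h4_mono ht hn'
  have H4u := h4_up ht hn'
  -- P2
  have P0 := p2_0 ht hn'
  have P1 := p2_1 ht hn'
  -- p3 linear relations (for the E inequality)
  have pr1 : p3 (n-1) = p3 (n-4) + ((n-1)/2 + 1) := by
    have h := p3rec (j := n-1) (by omega)
    have : (n-1) - 3 = n-4 := by omega
    rwa [this] at h
  have pr2 : p3 (n-4) = p3 (n-7) + ((n-4)/2 + 1) := by
    have h := p3rec (j := n-4) (by omega)
    have : (n-4) - 3 = n-7 := by omega
    rwa [this] at h
  have pr3 : p3 (n-2) = p3 (n-5) + ((n-2)/2 + 1) := by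
    have h := p3rec (j := n-2) (by omega)
    have : (n-2) - 3 = n-5 := by omega
    rwa [this] at h
  have pr4 : p3 (n-5) = p3 (n-8) + ((n-5)/2 + 1) := by
    have h := p3rec (j := n-5) (by omega)
    have : (n-5) - 3 = n-8 := by omega
    rwa [this] at h
  -- p3 quadratic inequality (for the D inequality)
  have pD : p3 (n-3) + p3 (n-5) ≥ p3 (n-2) + p3 (n-7) + t*t + 1 := by
    obtain ⟨w, rfl⟩ : ∃ w, n = w + 7 := ⟨n - 7, by omega⟩
    have c5 := p3closed (w+5)
    have c4 := p3closed (w+4)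
    have c2 := p3closed (w+2)
    have c0 := p3closed w
    have q5 : (w+5)*(w+5) = w*w + 10*w + 25 := by ring
    have q4 : (w+4)*(w+4) = w*w + 8*w + 16 := by ring
    have q2 : (w+2)*(w+2) = w*w + 4*w + 4 := by ring
    rw [q5] at c5
    rw [q4] at c4
    rw [q2] at c2
    have b5 := rho_le ((w+5) % 6)
    have b4 := rho_le ((w+4) % 6)
    have b2 := rho_le ((w+2) % 6)
    have b0 := rho_le (w % 6)
    have e3 : w + 7 - 3 = w + 4 := by omega
    have e5 : w + 7 - 5 = w + 2 := by omega
    have e2 : w + 7 - 2 = w + 5 := by omega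
    have e7 : w + 7 - 7 = w := by omega
    rw [e3, e5, e2, e7]
    set A := w * w with hA
    omega
  -- case split on t for the extra +1 in the E inequality
  rcases Nat.lt_or_ge t 3 with ht3 | ht3
  · have ht2 : t = 2 := by omega
    subst ht2
    have P2w := p2_w (n := n) (by omega)
    constructor <;> omega
  · have H3p := h3_plus ht3 hn'
    constructor <;> omega
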